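/- Let r = (R_j)_{j≥1} be a generic sequence of radii and c ∈ C(r). Then: (1) for every z ∈ A ∪ B_0 with z ≠ 0, |f_c(z)| = φ(|z|); and (2) for each j ≥ 1, f_c maps B_j bijectively onto the disk {w ∈ ℂ_p : |w| < φ(R_j)}, and for all z, w ∈ B_j one has |f_c(z) − f_c(w)| = (φ(R_j)/R_j)·|z − w|. -/

import Mathlib

noncomputable section

/-- `K` is a model of `ℂ_p`, the completion of an algebraic closure of `ℚ_p`:
it is a complete, algebraically closed, nonarchimedean normed field whose norm
extends the `p`-adic absolute value and in which the algebraic elements over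
`ℚ_p` are dense. -/
structure IsCp (p : ℕ) [Fact p.Prime] (K : Type*) [NormedField K] [Algebra ℚ_[p] K] : Prop where
  complete : CompleteSpace K
  norm_extends : ∀ x : ℚ_[p], ‖algebraMap ℚ_[p] K x‖ = ‖x‖
  isAlgClosed : IsAlgClosed K
  dense_algebraic : Dense {x : K | IsAlgebraic ℚ_[p] x}
  isNonarch : ∀ x y : K, ‖x + y‖ ≤ max ‖x‖ ‖y‖

/-- `ϱ = p^{-1/(p-1)}`. -/
def rho (p : ℕ) : ℝ := (p : ℝ) ^ (-1 / ((p : ℝ) - 1))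

/-- `R` is a sequence of radii: strictly increasing (for indices `≥ 1`),
with `R 1 > p`, tending to infinity. -/
def IsRadii (p : ℕ) (R : ℕ → ℝ) : Prop :=
  (∀ j, 1 ≤ j → R j < R (j + 1)) ∧ (p : ℝ) < R 1 ∧
    Filter.Tendsto R Filter.atTop Filter.atTop

/-- The piecewise-monomial map `φ`: for `R_{j-1} < t ≤ R_j` (with `R_0 := 0`),
`φ(t) = p (R_1 ⋯ R_{j-1})⁻¹ t^{p+j-1}`. -/
def phi (p : ℕ) (R : ℕ → ℝ) (t : ℝ) : ℝ :=
  let j := sInf {j : ℕ | 1 ≤ j ∧ t ≤ R j}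
  (p : ℝ) * (∏ i ∈ Finset.Icc 1 (j - 1), R i)⁻¹ * t ^ (p + j - 1)

/-- A generic sequence of radii. -/
def IsGenericRadii (p : ℕ) (R : ℕ → ℝ) : Prop :=
  IsRadii p R ∧ ∀ i j n : ℕ, 1 ≤ i → i < j → 1 ≤ n → (phi p R)^[n] (R i) ≠ R j

/-- Membership in the parameter space `C(r)`: `|c_j| = R_j` for all `j ≥ 1`. -/
def InC (p : ℕ) [Fact p.Prime] {K : Type*} [NormedField K] (R : ℕ → ℝ) (c : ℕ → K) : Prop :=
  ∀ j, 1 ≤ j → ‖c j‖ = R j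

/-- The transcendental entire map `f_c(z) = (z^p/p) ∏_{j ≥ 1} (1 - z/c_j)`. -/
def fc (p : ℕ) {K : Type*} [NormedField K] (c : ℕ → K) (z : K) : K :=
  z ^ p / (p : K) * ∏' j : ℕ, (1 - z / c (j + 1))

/-- The disk `B_0 = {|z| < 1}` for `j = 0`, and `B_j = {|z - c_j| < R_j}` for `j ≥ 1`. -/
def Bset {K : Type*} [NormedField K] (R : ℕ → ℝ) (c : ℕ → K) (j : ℕ) : Set K :=
  if j = 0 then {z : K | ‖z‖ < 1} else {z : K | ‖z - c j‖ < R j}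

/-- The set `A`, complement of all the disks `B_j`, `j ≥ 0`. -/
def Aset {K : Type*} [NormedField K] (R : ℕ → ℝ) (c : ℕ → K) : Set K :=
  (⋃ j, Bset R c j)ᶜ

/-- `n_j`, the minimal `n ≥ 1` with `R_j < φ^{∘(n+1)}(1)`. -/
def nseq (p : ℕ) (R : ℕ → ℝ) (j : ℕ) : ℕ :=
  sInf {n : ℕ | 1 ≤ n ∧ R j < (phi p R)^[n + 1] 1}

/-- `S_j = φ⁻¹(R_j)`. -/
def Sse (p : ℕ) (R : ℕ → ℝ) (j : ℕ) : ℝ := Function.invFun (phi p R) (R j)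

/-- `λ_j = φ(R_j)/R_j`. -/
def lam (p : ℕ) (R : ℕ → ℝ) (j : ℕ) : ℝ := phi p R (R j) / R j

/-- `L_k`: index of the first symbol of the `k`-th block `B_0^{m_k} A^{n_k} B_k^{…}`
of the itinerary `α(m, ℓ)`; `L_1 = 0` and `L_{k+1} = L_k + m_k + n_k + ℓ_{k+1}`. -/
def Lseq (m n l : ℕ → ℕ) : ℕ → ℕ
  | 0 => 0
  | 1 => 0
  | k + 2 => Lseq m n l (k + 1) + m (k + 1) + n (k + 1) + l (k + 2)

/-- `N_k = L_k + m_k + n_k`, the index of the final symbol `B_k` of the truncated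
itinerary `α^{(k)}` (so `α^{(k)}` has length `N_k + 1`). -/
def Nseq (m n l : ℕ → ℕ) (k : ℕ) : ℕ := Lseq m n l k + m k + n k

/-- The symbol (`some 0 = B_0`, `none = A`, `some k = B_k`) at position `i` of the
itinerary `α(m,ℓ) = B_0^{m_1} A^{n_1} B_1^{ℓ_2} B_0^{m_2} A^{n_2} B_2^{ℓ_3} ⋯`. -/
def itin (m n l : ℕ → ℕ) (i : ℕ) : Option ℕ :=
  let k := sSup {k : ℕ | 1 ≤ k ∧ Lseq m n l k ≤ i}
  if i < Lseq m n l k + m k then some 0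
  else if i < Lseq m n l k + m k + n k then none
  else some k

/-- The subset of `ℂ_p` corresponding to a symbol of the alphabet `{A, B_0, B_1, …}`. -/
def symbSet {K : Type*} [NormedField K] (R : ℕ → ℝ) (c : ℕ → K) : Option ℕ → Set K
  | none => Aset R c
  | some j => Bset R c j

/-- Condition (3.2) at `k`: `ϱ⁻¹ R_k p^{-m_k} λ_k^{ℓ_{k+1}} < 1`. -/
def Cond32 (p : ℕ) (R : ℕ → ℝ) (m l : ℕ → ℕ) (k : ℕ) : Prop :=
  (rho p)⁻¹ * R k * ((p : ℝ) ^ m k)⁻¹ * lam p R k ^ l (k + 1) < 1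

/-- Condition (3.3) for `k`: for all `2 ≤ j < k`,
`ε_k < ϱ^{k-j} R_k² (R_{j-1} S_{j-1})⁻¹ λ_{j-1}^{-ℓ_j}`. -/
def Cond33 (p : ℕ) (R : ℕ → ℝ) (ε : ℕ → ℝ) (l : ℕ → ℕ) (k : ℕ) : Prop :=
  ∀ j, 2 ≤ j → j < k →
    ε k < rho p ^ (k - j) * R k ^ 2 * (R (j - 1) * Sse p R (j - 1))⁻¹ *
      (lam p R (j - 1) ^ l j)⁻¹

/-- Condition (3.4) for `k`: for all `2 ≤ j ≤ k`,
`ϱ^{-2} R_{j-1} S_{j-1} λ_{j-1}^{ℓ_j} p^{-m_j} < 1`. -/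
def Cond34 (p : ℕ) (R : ℕ → ℝ) (m l : ℕ → ℕ) (k : ℕ) : Prop :=
  ∀ j, 2 ≤ j → j ≤ k →
    ((rho p) ^ 2)⁻¹ * (R (j - 1) * Sse p R (j - 1)) * lam p R (j - 1) ^ l j *
      ((p : ℝ) ^ m j)⁻¹ < 1

/-- Condition (3.5) at `k`: `p ϱ⁻¹ R_{k+1}² S_k⁻¹ λ_k^{-ℓ_{k+1}} < ε_{k+1}`. -/
def Cond35 (p : ℕ) (R : ℕ → ℝ) (ε : ℕ → ℝ) (l : ℕ → ℕ) (k : ℕ) : Prop :=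
  (p : ℝ) * (rho p)⁻¹ * R (k + 1) ^ 2 * (Sse p R k)⁻¹ * (lam p R k ^ l (k + 1))⁻¹ < ε (k + 1)

/-- `c' ∈ Δ_k(c, ε)`. -/
def InDelta (p : ℕ) [Fact p.Prime] {K : Type*} [NormedField K] (R : ℕ → ℝ) (c : ℕ → K)
    (ε : ℕ → ℝ) (k : ℕ) (c' : ℕ → K) : Prop :=
  InC p R c' ∧ (∀ j, 1 ≤ j → j < k → c' j = c j) ∧ ∀ j, k ≤ j → ‖c' j - c j‖ < ε j

/-- `c' ∈ U_k(c, ε)`. -/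
def InU (p : ℕ) [Fact p.Prime] {K : Type*} [NormedField K] (R : ℕ → ℝ) (c : ℕ → K)
    (k : ℕ) (ε : ℝ) (c' : ℕ → K) : Prop :=
  InC p R c' ∧ ‖c' k - c k‖ < ε ∧ ∀ j, 1 ≤ j → j ≠ k → c' j = c j

set_option linter.unusedSectionVars false
set_option linter.unusedVariables false
set_option maxHeartbeats 1000000

namespace AbsFc
open Filter Finset Topology

variable {K : Type*} [NormedField K] [IsUltrametricDist K]

lemma norm_add_right {x y : K} (h : ‖x‖ < ‖y‖) : ‖x + y‖ = ‖y‖ := by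
  rw [IsUltrametricDist.norm_add_eq_max_of_norm_ne_norm h.ne]; exact max_eq_right h.le

lemma norm_le_one_of_sub_le {q : ℝ} (hq : q ≤ 1) {x : K} (h : ‖x - 1‖ ≤ q) : ‖x‖ ≤ 1 := by
  calc ‖x‖ = ‖(x - 1) + 1‖ := by ring_nf
  _ ≤ max ‖x - 1‖ ‖(1:K)‖ := IsUltrametricDist.norm_add_le_max _ _
  _ ≤ 1 := by simp [max_le_iff]; linarith

lemma prod_sub_one_le {ι : Type*} {q : ℝ} (hq0 : 0 ≤ q) (hq : q ≤ 1) (s : Finset ι) (u : ι → K)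
    (h : ∀ i ∈ s, ‖u i - 1‖ ≤ q) : ‖(∏ i ∈ s, u i) - 1‖ ≤ q := by
  classical
  induction s using Finset.induction_on with
  | empty => simpa using hq0
  | insert _ _ hns ih =>
    rename_i a s
    have ha : ‖u a - 1‖ ≤ q := h a (Finset.mem_insert_self a s)
    have hprod : ‖(∏ i ∈ s, u i) - 1‖ ≤ q := ih (fun i hi => h i (Finset.mem_insert_of_mem hi))
    have key : (∏ i ∈ insert a s, u i) - 1 = u a * ((∏ i ∈ s, u i) - 1) + (u a - 1) := by
      rw [Finset.prod_insert hns]; ring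
    rw [key]
    refine le_trans (IsUltrametricDist.norm_add_le_max _ _) (max_le ?_ ha)
    rw [norm_mul]
    calc ‖u a‖ * ‖(∏ i ∈ s, u i) - 1‖ ≤ 1 * q :=
          mul_le_mul (norm_le_one_of_sub_le hq ha) hprod (norm_nonneg _) zero_le_one
    _ = q := one_mul q

/-- A sequence with `‖u i - 1‖ ≤ 1/2` everywhere and `u i → 1` is multipliable. -/
lemma multipliable_aux [CompleteSpace K] (u : ℕ → K) (hb : ∀ i, ‖u i - 1‖ ≤ 2⁻¹)
    (htend : Tendsto (fun i => u i - 1) atTop (𝓝 0)) : Multipliable u := by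
  have hcauchy : CauchySeq (fun s : Finset ℕ => ∏ i ∈ s, u i) := by
    rw [Metric.cauchySeq_iff]
    intro ε hε
    set δ := min (ε/3) 2⁻¹ with hδ
    have hδpos : 0 < δ := lt_min (by linarith) (by norm_num)
    obtain ⟨N, hN⟩ := (Metric.tendsto_atTop.mp (tendsto_zero_iff_norm_tendsto_zero.mp htend)) δ hδpos
    refine ⟨Finset.range N, fun s hs t ht => ?_⟩
    have key : ∀ r : Finset ℕ, Finset.range N ⊆ r →
        dist (∏ i ∈ r, u i) (∏ i ∈ Finset.range N, u i) ≤ δ := by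
      intro r hr
      rw [dist_eq_norm, ← Finset.prod_sdiff hr]
      have hre : (∏ i ∈ r \ Finset.range N, u i) * (∏ i ∈ Finset.range N, u i)
          - (∏ i ∈ Finset.range N, u i)
          = ((∏ i ∈ r \ Finset.range N, u i) - 1) * ∏ i ∈ Finset.range N, u i := by ring
      rw [hre, norm_mul]
      have h1 : ‖∏ i ∈ Finset.range N, u i‖ ≤ 1 := by
        rw [norm_prod]
        exact Finset.prod_le_one (fun i _ => norm_nonneg _)
          (fun i _ => norm_le_one_of_sub_le (by norm_num) (hb i))
      have h2 : ‖(∏ i ∈ r \ Finset.range N, u i) - 1‖ ≤ δ := by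
        refine prod_sub_one_le hδpos.le (le_trans (min_le_right _ _) (by norm_num)) _ _ ?_
        intro i hi
        have : N ≤ i := by
          by_contra hlt
          exact (Finset.mem_sdiff.mp hi).2 (Finset.mem_range.mpr (by omega))
        have h' := hN i this
        rw [Real.dist_0_eq_abs, abs_of_nonneg (norm_nonneg _)] at h'
        exact h'.le
      calc ‖(∏ i ∈ r \ Finset.range N, u i) - 1‖ * ‖∏ i ∈ Finset.range N, u i‖ ≤ δ * 1 :=
            mul_le_mul h2 h1 (norm_nonneg _) hδpos.le
      _ = δ := mul_one δ
    calc dist (∏ i ∈ s, u i) (∏ i ∈ t, u i)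
        ≤ dist (∏ i ∈ s, u i) (∏ i ∈ Finset.range N, u i)
          + dist (∏ i ∈ t, u i) (∏ i ∈ Finset.range N, u i) := dist_triangle_right _ _ _
    _ ≤ δ + δ := add_le_add (key s hs) (key t ht)
    _ ≤ ε/3 + ε/3 := add_le_add (min_le_left _ _) (min_le_left _ _)
    _ < ε := by linarith
  obtain ⟨a, ha⟩ := cauchySeq_tendsto_of_complete hcauchy
  exact ⟨a, ha⟩

/-- Multipliability of every tail, from `u i → 1`. -/
lemma multipliable_shift [CompleteSpace K] (u : ℕ → K)
    (htend : Tendsto (fun i => u i - 1) atTop (𝓝 0)) (N : ℕ) :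
    Multipliable (fun i => u (i + N)) := by
  obtain ⟨N', hN'⟩ := (Metric.tendsto_atTop.mp (tendsto_zero_iff_norm_tendsto_zero.mp htend)) 2⁻¹
    (by norm_num)
  have haux : Multipliable (fun i => u (i + (N' + N))) := by
    refine multipliable_aux _ (fun i => ?_) ?_
    · have h' := hN' (i + (N' + N)) (by omega)
      rw [Real.dist_0_eq_abs, abs_of_nonneg (norm_nonneg _)] at h'
      exact h'.le
    · exact htend.comp (tendsto_add_atTop_nat (N' + N))
  have : Multipliable (fun i => (fun j => u (j + N)) (i + N')) := by
    simpa [add_assoc] using haux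
  exact this.comp_nat_add

lemma multipliable_of_tendsto_one [CompleteSpace K] (u : ℕ → K)
    (htend : Tendsto (fun i => u i - 1) atTop (𝓝 0)) : Multipliable u := by
  simpa using multipliable_shift u htend 0

/-- Norm of an infinite product of elements close to 1. -/
lemma tprod_sub_one_le {q : ℝ} (hq0 : 0 ≤ q) (hq : q ≤ 1) (u : ℕ → K)
    (hm : Multipliable u) (h : ∀ i, ‖u i - 1‖ ≤ q) : ‖(∏' i, u i) - 1‖ ≤ q := by
  have hP := hm.hasProd
  have hmem : ∀ s : Finset ℕ, (∏ i ∈ s, u i) ∈ Metric.closedBall (1:K) q := by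
    intro s
    rw [Metric.mem_closedBall, dist_eq_norm]
    exact prod_sub_one_le hq0 hq s u (fun i _ => h i)
  have : (∏' i, u i) ∈ Metric.closedBall (1:K) q :=
    Metric.isClosed_closedBall.mem_of_tendsto hP (Filter.Eventually.of_forall hmem)
  rwa [Metric.mem_closedBall, dist_eq_norm] at this

lemma norm_tprod_eq_one {q : ℝ} (hq0 : 0 ≤ q) (hq : q < 1) (u : ℕ → K)
    (hm : Multipliable u) (h : ∀ i, ‖u i - 1‖ ≤ q) : ‖∏' i, u i‖ = 1 := by
  have h1 := tprod_sub_one_le hq0 hq.le u hm h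
  have : ‖(∏' i, u i) - 1 + 1‖ = ‖(1:K)‖ := norm_add_right (by simpa using lt_of_le_of_lt h1 hq)
  simpa using this

/-- Ultrametric bound for a difference of finite products. -/
lemma prod_diff_le {ι : Type*} (s : Finset ι) (a b : ι → K) (M : ι → ℝ) {C : ℝ} (hC : 0 ≤ C)
    (hM : ∀ i ∈ s, 0 ≤ M i)
    (ha : ∀ i ∈ s, ‖a i‖ ≤ M i) (hb : ∀ i ∈ s, ‖b i‖ ≤ M i)
    (hd : ∀ i ∈ s, ‖a i - b i‖ ≤ M i * C) :
    ‖(∏ i ∈ s, a i) - ∏ i ∈ s, b i‖ ≤ (∏ i ∈ s, M i) * C := by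
  classical
  induction s using Finset.induction_on with
  | empty => simpa using mul_nonneg zero_le_one hC
  | insert _ _ hns ih =>
    rename_i j s
    have hMprod : 0 ≤ ∏ i ∈ s, M i :=
      Finset.prod_nonneg (fun i hi => hM i (Finset.mem_insert_of_mem hi))
    have hbs : ‖∏ i ∈ s, b i‖ ≤ ∏ i ∈ s, M i := by
      rw [norm_prod]
      exact Finset.prod_le_prod (fun i _ => norm_nonneg _)
        (fun i hi => hb i (Finset.mem_insert_of_mem hi))
    have ihs : ‖(∏ i ∈ s, a i) - ∏ i ∈ s, b i‖ ≤ (∏ i ∈ s, M i) * C :=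
      ih (fun i hi => hM i (Finset.mem_insert_of_mem hi))
        (fun i hi => ha i (Finset.mem_insert_of_mem hi))
        (fun i hi => hb i (Finset.mem_insert_of_mem hi))
        (fun i hi => hd i (Finset.mem_insert_of_mem hi))
    have key : (∏ i ∈ insert j s, a i) - ∏ i ∈ insert j s, b i
        = a j * ((∏ i ∈ s, a i) - ∏ i ∈ s, b i) + (a j - b j) * ∏ i ∈ s, b i := by
      rw [Finset.prod_insert hns, Finset.prod_insert hns]; ring
    rw [key, Finset.prod_insert hns]
    refine le_trans (IsUltrametricDist.norm_add_le_max _ _) (max_le ?_ ?_)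
    · rw [norm_mul]
      calc ‖a j‖ * ‖(∏ i ∈ s, a i) - ∏ i ∈ s, b i‖ ≤ M j * ((∏ i ∈ s, M i) * C) :=
            mul_le_mul (ha j (Finset.mem_insert_self j s)) ihs (norm_nonneg _)
              (hM j (Finset.mem_insert_self j s))
      _ = M j * (∏ i ∈ s, M i) * C := by ring
    · rw [norm_mul]
      calc ‖a j - b j‖ * ‖∏ i ∈ s, b i‖ ≤ M j * C * (∏ i ∈ s, M i) :=
            mul_le_mul (hd j (Finset.mem_insert_self j s)) hbs (norm_nonneg _)
              (mul_nonneg (hM j (Finset.mem_insert_self j s)) hC)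
      _ = M j * (∏ i ∈ s, M i) * C := by ring



lemma prod_range_eq_Icc {M : Type*} [CommMonoid M] (f : ℕ → M) (n : ℕ) :
    ∏ i ∈ Finset.range n, f (i + 1) = ∏ i ∈ Finset.Icc 1 n, f i := by
  induction n with
  | zero => simp
  | succ n ih => rw [Finset.prod_range_succ, ih, Finset.prod_Icc_succ_top (by omega)]

section Radii
variable {p : ℕ} {R : ℕ → ℝ}

lemma R_lt (hR : IsRadii p R) : ∀ {i j : ℕ}, 1 ≤ i → i < j → R i < R j := by
  intro i j hi hij
  induction j with
  | zero => omega
  | succ n ih =>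
    rcases Nat.lt_or_ge i n with h | h
    · exact lt_trans (ih h) (hR.1 n (by omega))
    · have he : i = n := by omega
      subst he; exact hR.1 i hi

lemma R_le (hR : IsRadii p R) {i j : ℕ} (hi : 1 ≤ i) (hij : i ≤ j) : R i ≤ R j := by
  rcases eq_or_lt_of_le hij with h | h
  · rw [h]
  · exact (R_lt hR hi h).le

lemma p_le_R [Fact p.Prime] (hR : IsRadii p R) {j : ℕ} (hj : 1 ≤ j) : (p : ℝ) < R j :=
  lt_of_lt_of_le hR.2.1 (R_le hR le_rfl hj)

lemma two_le_pR [Fact p.Prime] : (2 : ℝ) ≤ (p : ℝ) := by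
  exact_mod_cast (Fact.out : p.Prime).two_le

lemma one_lt_R [Fact p.Prime] (hR : IsRadii p R) {j : ℕ} (hj : 1 ≤ j) : 1 < R j :=
  lt_trans (by linarith [two_le_pR (p := p)]) (p_le_R hR hj)

lemma R_pos [Fact p.Prime] (hR : IsRadii p R) {j : ℕ} (hj : 1 ≤ j) : 0 < R j :=
  lt_trans one_pos (one_lt_R hR hj)

lemma exists_R_gt (hR : IsRadii p R) (x : ℝ) : ∃ N, ∀ n, N ≤ n → x < R n := by
  obtain ⟨N, hN⟩ := (Filter.tendsto_atTop.mp hR.2.2 (x + 1)).exists_forall_of_atTop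
  exact ⟨N, fun n hn => by linarith [hN n hn]⟩

lemma phi_eq [Fact p.Prime] (hR : IsRadii p R) {t : ℝ} {j : ℕ} (hj : 1 ≤ j) (h1 : t ≤ R j)
    (h2 : ∀ i, 1 ≤ i → i < j → R i < t) :
    phi p R t = (p : ℝ) * (∏ i ∈ Finset.Icc 1 (j - 1), R i)⁻¹ * t ^ (p + j - 1) := by
  have hSet : {k : ℕ | 1 ≤ k ∧ t ≤ R k} = {k | 1 ≤ k ∧ t ≤ R k} := rfl
  have hmem : j ∈ {k : ℕ | 1 ≤ k ∧ t ≤ R k} := ⟨hj, h1⟩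
  have hinf : sInf {k : ℕ | 1 ≤ k ∧ t ≤ R k} = j := by
    refine le_antisymm (Nat.sInf_le hmem) ?_
    refine le_csInf ⟨j, hmem⟩ ?_
    intro k hk
    by_contra hlt
    exact absurd hk.2 (not_le.mpr (h2 k hk.1 (by omega)))
  unfold phi
  rw [hinf]

end Radii

section Factors
variable {p : ℕ} [Fact p.Prime] {K : Type*} [NormedField K] [IsUltrametricDist K]
  {R : ℕ → ℝ} {c : ℕ → K}

lemma norm_add_right' {x y : K} (h : ‖x‖ < ‖y‖) : ‖x + y‖ = ‖y‖ := by
  rw [IsUltrametricDist.norm_add_eq_max_of_norm_ne_norm h.ne]; exact max_eq_right h.le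

lemma norm_one_sub_of_lt' {x : K} (h : ‖x‖ < 1) : ‖1 - x‖ = 1 := by
  have := norm_add_right' (x := -x) (y := (1:K)) (by simpa using h)
  simpa [add_comm, sub_eq_add_neg] using this

lemma norm_one_sub_of_gt' {x : K} (h : 1 < ‖x‖) : ‖1 - x‖ = ‖x‖ := by
  have := norm_add_right' (x := (1:K)) (y := -x) (by simpa using h)
  simpa [sub_eq_add_neg] using this

lemma c_ne_zero (hR : IsRadii p R) (hc : InC p R c) {i : ℕ} (hi : 1 ≤ i) : c i ≠ 0 := by
  intro h
  have := hc i hi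
  rw [h, norm_zero] at this
  exact absurd this.symm (ne_of_gt (R_pos hR hi))

lemma norm_div_c (hR : IsRadii p R) (hc : InC p R c) {i : ℕ} (hi : 1 ≤ i) (z : K) :
    ‖z / c i‖ = ‖z‖ / R i := by rw [norm_div, hc i hi]

lemma norm_v_lt (hR : IsRadii p R) (hc : InC p R c) {i : ℕ} (hi : 1 ≤ i) {z : K}
    (h : ‖z‖ < R i) : ‖1 - z / c i‖ = 1 := by
  refine norm_one_sub_of_lt' ?_
  rw [norm_div_c hR hc hi]
  exact (div_lt_one (R_pos hR hi)).mpr h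

lemma norm_v_gt (hR : IsRadii p R) (hc : InC p R c) {i : ℕ} (hi : 1 ≤ i) {z : K}
    (h : R i < ‖z‖) : ‖1 - z / c i‖ = ‖z‖ / R i := by
  rw [← norm_div_c hR hc hi z]
  refine norm_one_sub_of_gt' ?_
  rw [norm_div_c hR hc hi]
  exact (one_lt_div (R_pos hR hi)).mpr h

lemma norm_v_A (hR : IsRadii p R) (hc : InC p R c) {i : ℕ} (hi : 1 ≤ i) {z : K}
    (hz : z ∈ Aset R c) (h : ‖z‖ = R i) : ‖1 - z / c i‖ = 1 := by
  have hne : c i ≠ 0 := c_ne_zero hR hc hi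
  have h1 : 1 - z / c i = (c i - z) / c i := by field_simp
  have h2 : ‖c i - z‖ ≤ R i := by
    have h' := IsUltrametricDist.norm_add_le_max (c i) (-z)
    rw [← sub_eq_add_neg, norm_neg, hc i hi, h] at h'
    simpa using h'
  have h3 : R i ≤ ‖c i - z‖ := by
    have hz' : z ∉ Bset R c i := by
      intro hmem
      exact hz (Set.mem_iUnion.mpr ⟨i, hmem⟩)
    rw [Bset, if_neg (by omega)] at hz'
    simp only [Set.mem_setOf_eq, not_lt] at hz'
    rwa [norm_sub_rev]
  rw [h1, norm_div, hc i hi, le_antisymm h2 h3, div_self (ne_of_gt (R_pos hR hi))]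

lemma tendsto_v (hR : IsRadii p R) (hc : InC p R c) (z : K) :
    Tendsto (fun i => (1 - z / c (i + 1)) - 1) atTop (𝓝 0) := by
  rw [tendsto_zero_iff_norm_tendsto_zero]
  have heq : ∀ i : ℕ, ‖(1 - z / c (i + 1)) - 1‖ = ‖z‖ / R (i + 1) := by
    intro i
    rw [show (1 - z / c (i+1)) - 1 = -(z / c (i+1)) by ring, norm_neg,
      norm_div_c hR hc (by omega)]
  simp only [heq]
  exact Tendsto.div_atTop tendsto_const_nhds (hR.2.2.comp (tendsto_add_atTop_nat 1))

end Factors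

section Part1
variable {p : ℕ} [Fact p.Prime] {K : Type*} [NormedField K] [IsUltrametricDist K]
  [CompleteSpace K] {R : ℕ → ℝ} {c : ℕ → K}

lemma multipliable_v (hR : IsRadii p R) (hc : InC p R c) (z : K) (N : ℕ) :
    Multipliable (fun i => 1 - z / c (i + N + 1)) := by
  have := multipliable_shift (fun i => 1 - z / c (i + 1)) (tendsto_v hR hc z) N
  simpa using this

lemma norm_tail_sub_one (hR : IsRadii p R) (hc : InC p R c) {z : K} {N : ℕ} (hN : 1 ≤ N)
    (hzN : ‖z‖ ≤ R N) :
    ‖(∏' i, (1 - z / c (i + N + 1))) - 1‖ ≤ ‖z‖ / R (N + 1) ∧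
      ‖∏' i, (1 - z / c (i + N + 1))‖ = 1 := by
  have hRN1 : 0 < R (N + 1) := R_pos hR (by omega)
  set q : ℝ := ‖z‖ / R (N + 1) with hq
  have hq0 : 0 ≤ q := div_nonneg (norm_nonneg _) hRN1.le
  have hq1 : q < 1 := by
    rw [hq, div_lt_one hRN1]
    exact lt_of_le_of_lt hzN (R_lt hR hN (by omega))
  have hbound : ∀ i : ℕ, ‖(1 - z / c (i + N + 1)) - 1‖ ≤ q := by
    intro i
    rw [show (1 - z / c (i + N + 1)) - 1 = -(z / c (i + N + 1)) by ring, norm_neg,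
      norm_div_c hR hc (by omega)]
    exact div_le_div_of_nonneg_left (norm_nonneg z) hRN1 (R_le hR (by omega) (by omega)) |>.trans le_rfl
  have hm := multipliable_v hR hc z N
  exact ⟨tprod_sub_one_le hq0 hq1.le _ hm hbound,
    norm_tprod_eq_one hq0 hq1 _ hm hbound⟩

lemma norm_fc_eq (hR : IsRadii p R) (hc : InC p R c) (hnp : ‖(p : K)‖ = (p : ℝ)⁻¹)
    {z : K} (hz : z ≠ 0) (hmem : z ∈ Aset R c ∪ Bset R c 0) :
    ‖fc p c z‖ = phi p R ‖z‖ := by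
  have hppos : (0:ℝ) < p := by linarith [two_le_pR (p := p)]
  set t := ‖z‖ with hts
  have ht : 0 < t := norm_pos_iff.mpr hz
  -- the minimal index j with t ≤ R j
  have hSne : ∃ k, k ∈ {k : ℕ | 1 ≤ k ∧ t ≤ R k} := by
    obtain ⟨N, hN⟩ := exists_R_gt hR t
    exact ⟨N + 1, by omega, (hN (N+1) (by omega)).le⟩
  set j := sInf {k : ℕ | 1 ≤ k ∧ t ≤ R k} with hjdef
  obtain ⟨hj1, hjle⟩ := Nat.sInf_mem hSne
  have hmin : ∀ i, 1 ≤ i → i < j → R i < t := by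
    intro i hi hij
    by_contra hle
    have : j ≤ i := Nat.sInf_le ⟨hi, not_lt.mp hle⟩
    omega
  rw [phi_eq hR hj1 hjle hmin]
  -- split off the head of the product
  unfold fc
  have hm : Multipliable (fun i : ℕ => 1 - z / c (i + 1)) := by
    simpa using multipliable_v hR hc z 0
  have hmt : Multipliable (fun i : ℕ => 1 - z / c (i + j + 1)) := multipliable_v hR hc z j
  have hsplit : (∏ i ∈ Finset.range j, (1 - z / c (i + 1))) * (∏' i, (1 - z / c (i + j + 1)))
      = ∏' i, (1 - z / c (i + 1)) := by
    have := Multipliable.prod_mul_tprod_nat_mul' (f := fun i : ℕ => 1 - z / c (i + 1)) (k := j)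
      (by simpa using hmt)
    simpa using this
  rw [← hsplit]
  -- tail norm is 1
  have htail : ‖∏' i, (1 - z / c (i + j + 1))‖ = 1 :=
    (norm_tail_sub_one hR hc hj1 hjle).2
  -- head
  have hj' : j - 1 + 1 = j := by omega
  have hhead : ‖∏ i ∈ Finset.range j, (1 - z / c (i + 1))‖
      = t ^ (j - 1) * (∏ i ∈ Finset.Icc 1 (j - 1), R i)⁻¹ := by
    rw [← hj', Finset.prod_range_succ]
    have hlast : ‖1 - z / c (j - 1 + 1)‖ = 1 := by
      rw [hj']
      rcases lt_or_eq_of_le hjle with hlt | heq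
      · exact norm_v_lt hR hc hj1 hlt
      · rcases hmem with hA | hB
        · exact norm_v_A hR hc hj1 hA heq
        · exfalso
          rw [Bset, if_pos rfl] at hB
          have : t < 1 := hB
          have := one_lt_R hR hj1
          rw [← heq] at this
          linarith
    rw [norm_mul, hlast, mul_one, norm_prod]
    have hfac : ∀ i ∈ Finset.range (j - 1), ‖1 - z / c (i + 1)‖ = t / R (i + 1) := by
      intro i hi
      have hi' : i + 1 < j := by
        have := Finset.mem_range.mp hi; omega
      exact norm_v_gt hR hc (by omega) (hmin (i + 1) (by omega) hi')
    rw [Finset.prod_congr rfl hfac]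
    have : ∏ i ∈ Finset.range (j - 1), (t / R (i + 1))
        = t ^ (j - 1) * (∏ i ∈ Finset.range (j - 1), R (i + 1))⁻¹ := by
      rw [Finset.prod_div_distrib, Finset.prod_const, Finset.card_range,
        ← Finset.prod_inv_distrib, div_eq_mul_inv, Finset.prod_inv_distrib]
    rw [this, prod_range_eq_Icc]
    simp [hj']
  rw [norm_mul, norm_mul, htail, hhead, norm_div, norm_pow, hnp, mul_one]
  rw [show p + j - 1 = p + (j - 1) by omega, pow_add]
  field_simp
  ring

end Part1

section Part2
variable {p : ℕ} [Fact p.Prime] {K : Type*} [NormedField K] [IsUltrametricDist K]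
  [CompleteSpace K] {R : ℕ → ℝ} {c : ℕ → K}

/-- the `i`-th factor of the infinite product -/
def vv (c : ℕ → K) (z : K) (i : ℕ) : K := 1 - z / c (i + 1)

/-- the factors with the `j`-th one replaced by `1` -/
def uu (c : ℕ → K) (j : ℕ) (z : K) (i : ℕ) : K := if i = j - 1 then 1 else vv c z i

def Pf (p : ℕ) (c : ℕ → K) (N : ℕ) (z : K) : K :=
  z ^ p / (p : K) * ∏ i ∈ Finset.range N, vv c z i

def Qf (p : ℕ) (c : ℕ → K) (j N : ℕ) (z : K) : K :=
  z ^ p / (p : K) * ∏ i ∈ Finset.range N, uu c j z i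

def gg (p : ℕ) (c : ℕ → K) (j : ℕ) (z : K) : K :=
  z ^ p / (p : K) * ∏' i : ℕ, uu c j z i

lemma mem_Bj (hR : IsRadii p R) (hc : InC p R c) {j : ℕ} (hj : 1 ≤ j) {z : K}
    (hz : z ∈ Bset R c j) : ‖z - c j‖ < R j ∧ ‖z‖ = R j := by
  rw [Bset, if_neg (by omega)] at hz
  refine ⟨hz, ?_⟩
  have h1 : ‖z - c j‖ < ‖c j‖ := by rw [hc j hj]; exact hz
  have h2 := norm_add_right' h1
  rw [sub_add_cancel] at h2
  rw [h2, hc j hj]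

lemma multipliable_uu (hR : IsRadii p R) (hc : InC p R c) {j : ℕ} (hj : 1 ≤ j) (z : K) :
    Multipliable (uu c j z) := by
  have htail : Multipliable (fun i => uu c j z (i + j)) := by
    have h1 : (fun i => uu c j z (i + j)) = fun i => vv c z (i + j) := by
      funext i
      rw [uu, if_neg (by omega)]
    rw [h1]
    have := multipliable_v hR hc z j
    simpa [vv, add_right_comm] using this
  exact htail.comp_nat_add

lemma multipliable_vv (hR : IsRadii p R) (hc : InC p R c) (z : K) (N : ℕ) :
    Multipliable (fun i => vv c z (i + N)) := by
  have := multipliable_v hR hc z N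
  simpa [vv, add_right_comm] using this

lemma fc_split (hR : IsRadii p R) (hc : InC p R c) (z : K) (N : ℕ) :
    fc p c z = Pf p c N z * ∏' i, vv c z (i + N) := by
  rw [fc, Pf]
  have := Multipliable.prod_mul_tprod_nat_mul' (f := fun i : ℕ => vv c z i) (k := N)
    (multipliable_vv hR hc z N)
  rw [mul_assoc, this]
  rfl

lemma gg_split (hR : IsRadii p R) (hc : InC p R c) {j : ℕ} (hj : 1 ≤ j) (z : K) {N : ℕ}
    (hN : j ≤ N) :
    gg p c j z = Qf p c j N z * ∏' i, vv c z (i + N) := by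
  rw [gg, Qf]
  have hmt : Multipliable (fun i => uu c j z (i + N)) := by
    have h1 : (fun i => uu c j z (i + N)) = fun i => vv c z (i + N) := by
      funext i
      rw [uu, if_neg (by omega)]
    rw [h1]; exact multipliable_vv hR hc z N
  have hterm := Multipliable.prod_mul_tprod_nat_mul' (f := uu c j z) (k := N) hmt
  have htp : (∏' i, uu c j z (i + N)) = ∏' i, vv c z (i + N) :=
    tprod_congr (fun i => by rw [uu, if_neg (by omega)])
  rw [mul_assoc, ← htp, hterm]

lemma Pf_eq (hc : InC p R c) {j : ℕ} (hj : 1 ≤ j) (z : K) {N : ℕ} (hN : j ≤ N) :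
    Pf p c N z = vv c z (j - 1) * Qf p c j N z := by
  rw [Pf, Qf]
  have hmem : j - 1 ∈ Finset.range N := Finset.mem_range.mpr (by omega)
  have h1 : ∏ i ∈ Finset.range N, vv c z i
      = vv c z (j - 1) * ∏ i ∈ (Finset.range N).erase (j - 1), vv c z i :=
    (Finset.mul_prod_erase _ _ hmem).symm
  have h2 : ∏ i ∈ Finset.range N, uu c j z i
      = ∏ i ∈ (Finset.range N).erase (j - 1), vv c z i := by
    rw [← Finset.prod_erase (Finset.range N) (f := uu c j z) (a := j - 1) (by rw [uu, if_pos rfl])]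
    refine Finset.prod_congr rfl (fun i hi => ?_)
    rw [uu, if_neg (Finset.mem_erase.mp hi).1]
  rw [h1, h2]; ring

lemma fc_factor (hR : IsRadii p R) (hc : InC p R c) {j : ℕ} (hj : 1 ≤ j) (z : K) :
    fc p c z = vv c z (j - 1) * gg p c j z := by
  rw [fc_split hR hc z j, gg_split hR hc hj z le_rfl, Pf_eq hc hj z le_rfl]
  ring

lemma vv_jsub (hj : 1 ≤ j) (z : K) : vv c z (j - 1) = 1 - z / c j := by
  rw [vv, Nat.sub_add_cancel hj]

-- the value φ(R j) and its pieces
lemma phiRj (hR : IsRadii p R) {j : ℕ} (hj : 1 ≤ j) :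
    phi p R (R j) = ((p : ℝ) * R j ^ p * R j ^ (j - 1)) * (∏ i ∈ Finset.Icc 1 (j - 1), R i)⁻¹ := by
  rw [phi_eq hR hj le_rfl (fun i hi hij => R_lt hR hi hij),
    show p + j - 1 = p + (j - 1) by omega, pow_add]
  ring

lemma prodIcc_pos (hR : IsRadii p R) (j : ℕ) [Fact p.Prime] :
    0 < ∏ i ∈ Finset.Icc 1 (j - 1), R i :=
  Finset.prod_pos (fun i hi => R_pos hR (Finset.mem_Icc.mp hi).1)

lemma phiRj_pos (hR : IsRadii p R) {j : ℕ} (hj : 1 ≤ j) : 0 < phi p R (R j) := by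
  rw [phiRj hR hj]
  have h1 : (0:ℝ) < p := by linarith [two_le_pR (p := p)]
  have h2 : 0 < R j := R_pos hR hj
  have h3 := prodIcc_pos hR j
  exact mul_pos (mul_pos (mul_pos h1 (pow_pos h2 p)) (pow_pos h2 _)) (inv_pos.mpr h3)

lemma norm_mono (hnp : ‖(p : K)‖ = (p : ℝ)⁻¹) {z : K} {t : ℝ} (hz : ‖z‖ = t) :
    ‖z ^ p / (p : K)‖ = (p : ℝ) * t ^ p := by
  have h1 : (0:ℝ) < p := by linarith [two_le_pR (p := p)]
  rw [norm_div, norm_pow, hnp, hz, div_eq_mul_inv, inv_inv, mul_comm]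

-- the sup bounds for the factors
def Mbd (R : ℕ → ℝ) (j i : ℕ) : ℝ := if i + 1 < j then R j / R (i + 1) else 1

lemma Mbd_nonneg (hR : IsRadii p R) {j : ℕ} (hj : 1 ≤ j) (i : ℕ) : 0 ≤ Mbd R j i := by
  rw [Mbd]
  split
  · exact (div_nonneg (R_pos hR hj).le (R_pos hR (by omega)).le)
  · norm_num

lemma prod_Mbd (hR : IsRadii p R) {j N : ℕ} (hj : 1 ≤ j) (hN : j ≤ N) :
    ∏ i ∈ Finset.range N, Mbd R j i
      = R j ^ (j - 1) * (∏ i ∈ Finset.Icc 1 (j - 1), R i)⁻¹ := by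
  have hsub : Finset.range (j - 1) ⊆ Finset.range N := Finset.range_subset_range.mpr (by omega)
  have hoff : ∀ i ∈ Finset.range N, i ∉ Finset.range (j - 1) → Mbd R j i = 1 := by
    intro i _ hi
    simp only [Finset.mem_range, not_lt] at hi
    rw [Mbd, if_neg (by omega)]
  rw [← Finset.prod_subset hsub hoff]
  have hfac : ∀ i ∈ Finset.range (j - 1), Mbd R j i = R j / R (i + 1) := by
    intro i hi
    rw [Mbd, if_pos (by have := Finset.mem_range.mp hi; omega)]
  rw [Finset.prod_congr rfl hfac, Finset.prod_div_distrib, Finset.prod_const,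
    Finset.card_range, div_eq_mul_inv, prod_range_eq_Icc]

lemma norm_uu_le (hR : IsRadii p R) (hc : InC p R c) {j : ℕ} (hj : 1 ≤ j) {z : K}
    (hz : ‖z‖ = R j) (i : ℕ) : ‖uu c j z i‖ ≤ Mbd R j i := by
  rw [uu, Mbd]
  rcases eq_or_ne i (j - 1) with h | h
  · rw [if_pos h, if_neg (by omega), norm_one]
  · rw [if_neg h, vv]
    rcases lt_or_ge (i + 1) j with h2 | h2
    · have h4 : R (i + 1) < ‖z‖ := by rw [hz]; exact R_lt hR (by omega) h2
      rw [if_pos h2, norm_v_gt hR hc (by omega) h4, hz]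
    · have h3 : j < i + 1 := by omega
      have h4 : ‖z‖ < R (i + 1) := by rw [hz]; exact R_lt hR hj h3
      rw [if_neg (by omega), norm_v_lt hR hc (by omega) h4]

lemma norm_uu_diff (hR : IsRadii p R) (hc : InC p R c) {j : ℕ} (hj : 1 ≤ j) (z w : K) (i : ℕ) :
    ‖uu c j z i - uu c j w i‖ ≤ Mbd R j i * (‖z - w‖ / R j) := by
  have hRj : 0 < R j := R_pos hR hj
  rcases eq_or_ne i (j - 1) with h | h
  · rw [uu, uu, if_pos h, if_pos h, sub_self, norm_zero]
    exact mul_nonneg (Mbd_nonneg hR hj i) (div_nonneg (norm_nonneg _) hRj.le)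
  · rw [uu, uu, if_neg h, if_neg h, vv, vv]
    have hdiff : (1 - z / c (i+1)) - (1 - w / c (i+1)) = (w - z) / c (i+1) := by ring
    rw [hdiff, norm_div_c hR hc (by omega), norm_sub_rev]
    rw [Mbd]
    split
    · rw [div_mul_div_comm, mul_comm (R j), mul_div_mul_right _ _ (ne_of_gt hRj)]
    · rw [one_mul]
      exact div_le_div_of_nonneg_left (norm_nonneg _) hRj (R_le hR hj (by omega))

lemma norm_sub_le_max' (a b : K) : ‖a - b‖ ≤ max ‖a‖ ‖b‖ := by
  rw [sub_eq_add_neg]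
  simpa using IsUltrametricDist.norm_add_le_max a (-b)

lemma norm_mono_diff (hR : IsRadii p R) (hnp : ‖(p : K)‖ = (p : ℝ)⁻¹) {j : ℕ} (hj : 1 ≤ j)
    {z w : K} (hz : ‖z‖ = R j) (hw : ‖w‖ = R j) :
    ‖z ^ p / (p : K) - w ^ p / (p : K)‖ ≤ ((p : ℝ) * R j ^ p) * (‖z - w‖ / R j) := by
  have hRj := R_pos hR hj
  have hp1 : 1 ≤ p := (Fact.out : p.Prime).one_lt.le
  have hpp : (0:ℝ) < p := by linarith [two_le_pR (p := p)]
  have hgeom : z ^ p - w ^ p = (∑ i ∈ Finset.range p, z ^ i * w ^ (p - 1 - i)) * (z - w) :=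
    (geom_sum₂_mul z w p).symm
  have hsum : ‖∑ i ∈ Finset.range p, z ^ i * w ^ (p - 1 - i)‖ ≤ R j ^ (p - 1) := by
    refine IsUltrametricDist.norm_sum_le_of_forall_le_of_nonneg (pow_nonneg hRj.le _) ?_
    intro i hi
    have hip : i < p := Finset.mem_range.mp hi
    rw [norm_mul, norm_pow, norm_pow, hz, hw, ← pow_add,
      show i + (p - 1 - i) = p - 1 by omega]
  have hdiv : z ^ p / (p : K) - w ^ p / (p : K) = (z ^ p - w ^ p) / (p : K) := by ring
  rw [hdiv, norm_div, hnp, hgeom, norm_mul, div_eq_mul_inv, inv_inv]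
  have hrhs : (p:ℝ) * R j ^ p * (‖z - w‖ / R j) = R j ^ (p - 1) * ‖z - w‖ * p := by
    rw [show R j ^ p = R j ^ (p - 1) * R j by rw [← pow_succ, show p - 1 + 1 = p by omega]]
    field_simp
  rw [hrhs]
  exact mul_le_mul_of_nonneg_right
    (mul_le_mul_of_nonneg_right hsum (norm_nonneg (z - w))) hpp.le

lemma norm_Qf (hR : IsRadii p R) (hc : InC p R c) (hnp : ‖(p : K)‖ = (p : ℝ)⁻¹) {j : ℕ}
    (hj : 1 ≤ j) {z : K} (hz : z ∈ Bset R c j) {N : ℕ} (hN : j ≤ N) :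
    ‖Qf p c j N z‖ = phi p R (R j) := by
  obtain ⟨hz1, hz2⟩ := mem_Bj hR hc hj hz
  rw [Qf, norm_mul, norm_mono hnp hz2, norm_prod]
  have hsub : Finset.range (j - 1) ⊆ Finset.range N := Finset.range_subset_range.mpr (by omega)
  have hoff : ∀ i ∈ Finset.range N, i ∉ Finset.range (j - 1) → ‖uu c j z i‖ = 1 := by
    intro i _ hi
    simp only [Finset.mem_range, not_lt] at hi
    rcases eq_or_ne i (j - 1) with h | h
    · rw [uu, if_pos h, norm_one]
    · have h3 : j < i + 1 := by omega
      have h4 : ‖z‖ < R (i + 1) := by rw [hz2]; exact R_lt hR hj h3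
      rw [uu, if_neg h, vv, norm_v_lt hR hc (by omega) h4]
  rw [← Finset.prod_subset hsub hoff]
  have hfac : ∀ i ∈ Finset.range (j - 1), ‖uu c j z i‖ = R j / R (i + 1) := by
    intro i hi
    have hilt := Finset.mem_range.mp hi
    have h4 : R (i + 1) < ‖z‖ := by rw [hz2]; exact R_lt hR (by omega) (by omega)
    rw [uu, if_neg (by omega), vv, norm_v_gt hR hc (by omega) h4, hz2]
  rw [Finset.prod_congr rfl hfac, Finset.prod_div_distrib, Finset.prod_const,
    Finset.card_range, div_eq_mul_inv, prod_range_eq_Icc, phiRj hR hj]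
  ring

lemma norm_Qf_diff (hR : IsRadii p R) (hc : InC p R c) (hnp : ‖(p : K)‖ = (p : ℝ)⁻¹) {j : ℕ}
    (hj : 1 ≤ j) {z w : K} (hz : z ∈ Bset R c j) (hw : w ∈ Bset R c j) {N : ℕ} (hN : j ≤ N) :
    ‖Qf p c j N z - Qf p c j N w‖ ≤ phi p R (R j) * (‖z - w‖ / R j) := by
  obtain ⟨hz1, hz2⟩ := mem_Bj hR hc hj hz
  obtain ⟨hw1, hw2⟩ := mem_Bj hR hc hj hw
  have hRj := R_pos hR hj
  set C := ‖z - w‖ / R j with hC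
  have hC0 : 0 ≤ C := div_nonneg (norm_nonneg _) hRj.le
  have hkey : Qf p c j N z - Qf p c j N w
      = z ^ p / (p : K) * ((∏ i ∈ Finset.range N, uu c j z i) - ∏ i ∈ Finset.range N, uu c j w i)
        + (z ^ p / (p : K) - w ^ p / (p : K)) * ∏ i ∈ Finset.range N, uu c j w i := by
    rw [Qf, Qf]; ring
  have hU : ‖(∏ i ∈ Finset.range N, uu c j z i) - ∏ i ∈ Finset.range N, uu c j w i‖
      ≤ (∏ i ∈ Finset.range N, Mbd R j i) * C :=
    prod_diff_le _ _ _ _ hC0 (fun i _ => Mbd_nonneg hR hj i)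
      (fun i _ => norm_uu_le hR hc hj hz2 i) (fun i _ => norm_uu_le hR hc hj hw2 i)
      (fun i _ => norm_uu_diff hR hc hj z w i)
  have hUw : ‖∏ i ∈ Finset.range N, uu c j w i‖ ≤ ∏ i ∈ Finset.range N, Mbd R j i := by
    rw [norm_prod]
    exact Finset.prod_le_prod (fun i _ => norm_nonneg _) (fun i _ => norm_uu_le hR hc hj hw2 i)
  have hprodM : ∏ i ∈ Finset.range N, Mbd R j i
      = R j ^ (j - 1) * (∏ i ∈ Finset.Icc 1 (j - 1), R i)⁻¹ := prod_Mbd hR hj hN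
  have hMpos : 0 ≤ ∏ i ∈ Finset.range N, Mbd R j i :=
    Finset.prod_nonneg (fun i _ => Mbd_nonneg hR hj i)
  have hphival : phi p R (R j) * C
      = ((p:ℝ) * R j ^ p) * ((∏ i ∈ Finset.range N, Mbd R j i) * C) := by
    rw [hprodM, phiRj hR hj]; ring
  rw [hkey, hphival]
  refine le_trans (IsUltrametricDist.norm_add_le_max _ _) (max_le ?_ ?_)
  · rw [norm_mul, norm_mono hnp hz2]
    exact mul_le_mul_of_nonneg_left hU (by positivity)
  · rw [norm_mul]
    calc ‖z ^ p / (p:K) - w ^ p / (p:K)‖ * ‖∏ i ∈ Finset.range N, uu c j w i‖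
        ≤ ((p:ℝ) * R j ^ p * C) * ∏ i ∈ Finset.range N, Mbd R j i := by
          refine mul_le_mul ?_ hUw (norm_nonneg _) (by positivity)
          exact norm_mono_diff hR hnp hj hz2 hw2
    _ = (p:ℝ) * R j ^ p * ((∏ i ∈ Finset.range N, Mbd R j i) * C) := by ring

lemma norm_tail_Bj (hR : IsRadii p R) (hc : InC p R c) {j : ℕ} (hj : 1 ≤ j) {z : K}
    (hz2 : ‖z‖ = R j) {N : ℕ} (hN : j ≤ N) :
    ‖(∏' i, vv c z (i + N)) - 1‖ ≤ R j / R (N + 1) ∧ ‖∏' i, vv c z (i + N)‖ = 1 := by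
  have hzN : ‖z‖ ≤ R N := by rw [hz2]; exact R_le hR hj hN
  have := norm_tail_sub_one hR hc (le_trans hj hN) hzN
  rw [hz2] at this
  have hvveq : (fun i => (1 : K) - z / c (i + N + 1)) = fun i => vv c z (i + N) := by
    funext i; rw [vv]
  rw [← hvveq]
  exact this

lemma norm_gg (hR : IsRadii p R) (hc : InC p R c) (hnp : ‖(p : K)‖ = (p : ℝ)⁻¹) {j : ℕ}
    (hj : 1 ≤ j) {z : K} (hz : z ∈ Bset R c j) : ‖gg p c j z‖ = phi p R (R j) := by
  obtain ⟨hz1, hz2⟩ := mem_Bj hR hc hj hz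
  rw [gg_split hR hc hj z le_rfl, norm_mul, norm_Qf hR hc hnp hj hz le_rfl,
    (norm_tail_Bj hR hc hj hz2 le_rfl).2, mul_one]

lemma norm_gg_diff (hR : IsRadii p R) (hc : InC p R c) (hnp : ‖(p : K)‖ = (p : ℝ)⁻¹) {j : ℕ}
    (hj : 1 ≤ j) {z w : K} (hz : z ∈ Bset R c j) (hw : w ∈ Bset R c j) :
    ‖gg p c j z - gg p c j w‖ ≤ phi p R (R j) * (‖z - w‖ / R j) := by
  obtain ⟨hz1, hz2⟩ := mem_Bj hR hc hj hz
  obtain ⟨hw1, hw2⟩ := mem_Bj hR hc hj hw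
  have hRj := R_pos hR hj
  have hphipos := phiRj_pos hR hj
  rcases eq_or_ne z w with rfl | hzw
  · simp [sub_self]
  have hzwpos : 0 < ‖z - w‖ := norm_pos_iff.mpr (sub_ne_zero_of_ne hzw)
  set C := ‖z - w‖ / R j with hC
  have hCpos : 0 < C := div_pos hzwpos hRj
  -- pick a large N
  obtain ⟨N₁, hN₁⟩ := exists_R_gt hR (R j / C)
  set N := max j N₁ with hNdef
  have hNj : j ≤ N := le_max_left _ _
  have hRN1 : R j / R (N + 1) < C := by
    have h1 : R j / C < R (N + 1) := hN₁ (N + 1) (le_trans (le_max_right j N₁) (Nat.le_succ N))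
    have h2 : 0 < R (N + 1) := R_pos hR (by omega)
    rw [div_lt_iff₀ hCpos] at h1
    rw [div_lt_iff₀ h2]
    nlinarith
  have htz := norm_tail_Bj hR hc hj hz2 hNj
  have htw := norm_tail_Bj hR hc hj hw2 hNj
  have hsplitz := gg_split hR hc hj z hNj
  have hsplitw := gg_split hR hc hj w hNj
  have hdecomp : gg p c j z - gg p c j w
      = (Qf p c j N z - Qf p c j N w)
        + (Qf p c j N z * ((∏' i, vv c z (i + N)) - 1)
          - Qf p c j N w * ((∏' i, vv c w (i + N)) - 1)) := by
    rw [hsplitz, hsplitw]; ring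
  rw [hdecomp]
  refine le_trans (IsUltrametricDist.norm_add_le_max _ _) (max_le ?_ ?_)
  · exact norm_Qf_diff hR hc hnp hj hz hw hNj
  · refine le_trans (norm_sub_le_max' _ _) (max_le ?_ ?_) <;> rw [norm_mul]
    · calc ‖Qf p c j N z‖ * ‖(∏' i, vv c z (i + N)) - 1‖
          ≤ phi p R (R j) * (R j / R (N + 1)) := by
            rw [norm_Qf hR hc hnp hj hz hNj]
            exact mul_le_mul_of_nonneg_left htz.1 hphipos.le
      _ ≤ phi p R (R j) * C := mul_le_mul_of_nonneg_left hRN1.le hphipos.le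
    · calc ‖Qf p c j N w‖ * ‖(∏' i, vv c w (i + N)) - 1‖
          ≤ phi p R (R j) * (R j / R (N + 1)) := by
            rw [norm_Qf hR hc hnp hj hw hNj]
            exact mul_le_mul_of_nonneg_left htw.1 hphipos.le
      _ ≤ phi p R (R j) * C := mul_le_mul_of_nonneg_left hRN1.le hphipos.le

lemma fc_scaling (hR : IsRadii p R) (hc : InC p R c) (hnp : ‖(p : K)‖ = (p : ℝ)⁻¹) {j : ℕ}
    (hj : 1 ≤ j) {z w : K} (hz : z ∈ Bset R c j) (hw : w ∈ Bset R c j) :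
    ‖fc p c z - fc p c w‖ = phi p R (R j) / R j * ‖z - w‖ := by
  obtain ⟨hz1, hz2⟩ := mem_Bj hR hc hj hz
  obtain ⟨hw1, hw2⟩ := mem_Bj hR hc hj hw
  have hRj := R_pos hR hj
  have hphipos := phiRj_pos hR hj
  rcases eq_or_ne z w with rfl | hzw
  · simp [sub_self]
  have hzwpos : 0 < ‖z - w‖ := norm_pos_iff.mpr (sub_ne_zero_of_ne hzw)
  set C := ‖z - w‖ / R j with hC
  have hCpos : 0 < C := div_pos hzwpos hRj
  obtain ⟨N₁, hN₁⟩ := exists_R_gt hR (R j / C)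
  set N := max j N₁ with hNdef
  have hNj : j ≤ N := le_max_left _ _
  have hRN1 : R j / R (N + 1) < C := by
    have h1 : R j / C < R (N + 1) := hN₁ (N + 1) (le_trans (le_max_right j N₁) (Nat.le_succ N))
    have h2 : 0 < R (N + 1) := R_pos hR (by omega)
    rw [div_lt_iff₀ hCpos] at h1
    rw [div_lt_iff₀ h2]
    nlinarith
  have hQz := norm_Qf hR hc hnp hj hz hNj
  have hQw := norm_Qf hR hc hnp hj hw hNj
  have hcj0 : c j ≠ 0 := c_ne_zero hR hc hj
  -- norms of the `j`-th factor
  have hvz : ‖vv c z (j - 1)‖ < 1 := by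
    rw [vv_jsub hj, show (1 : K) - z / c j = (c j - z) / c j by
      rw [sub_div, div_self hcj0], norm_div, norm_sub_rev, hc j hj]
    exact (div_lt_one hRj).mpr hz1
  have hvw : ‖vv c w (j - 1)‖ < 1 := by
    rw [vv_jsub hj, show (1 : K) - w / c j = (c j - w) / c j by
      rw [sub_div, div_self hcj0], norm_div, norm_sub_rev, hc j hj]
    exact (div_lt_one hRj).mpr hw1
  -- main term
  have hPdiff : ‖Pf p c N z - Pf p c N w‖ = phi p R (R j) * C := by
    have hvdiff : vv c z (j - 1) - vv c w (j - 1) = (w - z) / c j := by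
      rw [vv_jsub hj, vv_jsub hj]; ring
    have hdecomp : Pf p c N z - Pf p c N w
        = (w - z) / c j * Qf p c j N z + vv c w (j - 1) * (Qf p c j N z - Qf p c j N w) := by
      rw [Pf_eq hc hj z hNj, Pf_eq hc hj w hNj, ← hvdiff]; ring
    have hfirst : ‖(w - z) / c j * Qf p c j N z‖ = phi p R (R j) * C := by
      rw [norm_mul, norm_div_c hR hc hj, norm_sub_rev, hQz, hC]; ring
    have hsecond : ‖vv c w (j - 1) * (Qf p c j N z - Qf p c j N w)‖ < phi p R (R j) * C := by
      rw [norm_mul]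
      calc ‖vv c w (j - 1)‖ * ‖Qf p c j N z - Qf p c j N w‖
          ≤ ‖vv c w (j - 1)‖ * (phi p R (R j) * C) :=
            mul_le_mul_of_nonneg_left (norm_Qf_diff hR hc hnp hj hz hw hNj) (norm_nonneg _)
        _ < 1 * (phi p R (R j) * C) :=
            mul_lt_mul_of_pos_right hvw (by positivity)
        _ = phi p R (R j) * C := one_mul _
    rw [hdecomp, add_comm, norm_add_right' (by rw [hfirst]; exact hsecond), hfirst]
  -- error term
  have hPzle : ‖Pf p c N z‖ ≤ phi p R (R j) := by
    rw [Pf_eq hc hj z hNj, norm_mul, ← one_mul (phi p R (R j))]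
    exact mul_le_mul hvz.le (le_of_eq hQz) (norm_nonneg _) zero_le_one
  have hPwle : ‖Pf p c N w‖ ≤ phi p R (R j) := by
    rw [Pf_eq hc hj w hNj, norm_mul, ← one_mul (phi p R (R j))]
    exact mul_le_mul hvw.le (le_of_eq hQw) (norm_nonneg _) zero_le_one
  have htz := norm_tail_Bj hR hc hj hz2 hNj
  have htw := norm_tail_Bj hR hc hj hw2 hNj
  have herr : ‖Pf p c N z * ((∏' i, vv c z (i + N)) - 1)
      - Pf p c N w * ((∏' i, vv c w (i + N)) - 1)‖ < phi p R (R j) * C := by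
    refine lt_of_le_of_lt (norm_sub_le_max' _ _) (max_lt ?_ ?_) <;> rw [norm_mul]
    · calc ‖Pf p c N z‖ * ‖(∏' i, vv c z (i + N)) - 1‖
          ≤ phi p R (R j) * (R j / R (N + 1)) :=
            mul_le_mul hPzle htz.1 (norm_nonneg _) hphipos.le
      _ < phi p R (R j) * C := mul_lt_mul_of_pos_left hRN1 hphipos
    · calc ‖Pf p c N w‖ * ‖(∏' i, vv c w (i + N)) - 1‖
          ≤ phi p R (R j) * (R j / R (N + 1)) :=
            mul_le_mul hPwle htw.1 (norm_nonneg _) hphipos.le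
      _ < phi p R (R j) * C := mul_lt_mul_of_pos_left hRN1 hphipos
  have hfcd : fc p c z - fc p c w
      = (Pf p c N z - Pf p c N w)
        + (Pf p c N z * ((∏' i, vv c z (i + N)) - 1)
          - Pf p c N w * ((∏' i, vv c w (i + N)) - 1)) := by
    rw [fc_split hR hc z N, fc_split hR hc w N]; ring
  rw [hfcd, add_comm, norm_add_right' (by rw [hPdiff]; exact herr), hPdiff, hC]
  ring

lemma fc_zero (hR : IsRadii p R) (hc : InC p R c) {j : ℕ} (hj : 1 ≤ j) : fc p c (c j) = 0 := by
  rw [fc_factor hR hc hj, vv_jsub hj, div_self (c_ne_zero hR hc hj), sub_self, zero_mul]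

lemma cj_mem_Bj (hR : IsRadii p R) (hc : InC p R c) {j : ℕ} (hj : 1 ≤ j) :
    c j ∈ Bset R c j := by
  rw [Bset, if_neg (by omega)]
  simp only [Set.mem_setOf_eq, sub_self, norm_zero]
  exact R_pos hR hj

lemma norm_fc_Bj (hR : IsRadii p R) (hc : InC p R c) (hnp : ‖(p : K)‖ = (p : ℝ)⁻¹) {j : ℕ}
    (hj : 1 ≤ j) {z : K} (hz : z ∈ Bset R c j) :
    ‖fc p c z‖ = phi p R (R j) / R j * ‖z - c j‖ := by
  have := fc_scaling hR hc hnp hj hz (cj_mem_Bj hR hc hj)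
  rwa [fc_zero hR hc hj, sub_zero] at this

lemma fc_surj (hR : IsRadii p R) (hc : InC p R c) (hnp : ‖(p : K)‖ = (p : ℝ)⁻¹) {j : ℕ}
    (hj : 1 ≤ j) {w : K} (hw : ‖w‖ < phi p R (R j)) :
    ∃ z ∈ Bset R c j, fc p c z = w := by
  have hphipos := phiRj_pos hR hj
  have hRj := R_pos hR hj
  have hcj0 : c j ≠ 0 := c_ne_zero hR hc hj
  rcases eq_or_ne w 0 with rfl | hw0
  · exact ⟨c j, cj_mem_Bj hR hc hj, fc_zero hR hc hj⟩
  have hwpos : 0 < ‖w‖ := norm_pos_iff.mpr hw0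
  set ρ := R j * ‖w‖ / phi p R (R j) with hρ
  have hρpos : 0 < ρ := by positivity
  have hρlt : ρ < R j := by
    rw [hρ, div_lt_iff₀ hphipos]
    nlinarith
  set D : Set K := Metric.closedBall (c j) ρ with hD
  have hDsub : ∀ x ∈ D, x ∈ Bset R c j := by
    intro x hx
    rw [Bset, if_neg (by omega)]
    have hx' := Metric.mem_closedBall.mp hx
    rw [dist_eq_norm] at hx'
    exact lt_of_le_of_lt hx' hρlt
  have hgne : ∀ x ∈ D, gg p c j x ≠ 0 := by
    intro x hx h0
    have := norm_gg hR hc hnp hj (hDsub x hx)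
    rw [h0, norm_zero] at this
    linarith
  set Φ : K → K := fun x => c j - c j * w / gg p c j x with hΦ
  have hΦmem : ∀ x ∈ D, Φ x ∈ D := by
    intro x hx
    rw [Metric.mem_closedBall, dist_eq_norm]
    have he : Φ x - c j = -(c j * w / gg p c j x) := by rw [hΦ]; ring
    rw [he, norm_neg, norm_div, norm_mul, hc j hj, norm_gg hR hc hnp hj (hDsub x hx)]
  have hcontr : ∀ x ∈ D, ∀ y ∈ D, ‖Φ x - Φ y‖ ≤ ‖w‖ / phi p R (R j) * ‖x - y‖ := by
    intro x hx y hy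
    have hgx := hgne x hx
    have hgy := hgne y hy
    have hdiff : Φ x - Φ y
        = c j * w * (gg p c j x - gg p c j y) / (gg p c j x * gg p c j y) := by
      rw [hΦ]
      field_simp
      ring
    rw [hdiff, norm_div, norm_mul, norm_mul, norm_mul, hc j hj,
      norm_gg hR hc hnp hj (hDsub x hx), norm_gg hR hc hnp hj (hDsub y hy)]
    have hgd := norm_gg_diff hR hc hnp hj (hDsub x hx) (hDsub y hy)
    calc R j * ‖w‖ * ‖gg p c j x - gg p c j y‖ / (phi p R (R j) * phi p R (R j))
        ≤ R j * ‖w‖ * (phi p R (R j) * (‖x - y‖ / R j)) / (phi p R (R j) * phi p R (R j)) := by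
          gcongr
    _ = ‖w‖ / phi p R (R j) * ‖x - y‖ := by
          field_simp
  haveI : Nonempty D := ⟨⟨c j, Metric.mem_closedBall_self hρpos.le⟩⟩
  haveI : CompleteSpace D := Metric.isClosed_closedBall.completeSpace_coe
  set q : NNReal := ⟨‖w‖ / phi p R (R j), by positivity⟩ with hqdef
  have hq1 : q < 1 := by
    rw [← NNReal.coe_lt_coe, NNReal.coe_one]
    exact (div_lt_one hphipos).mpr hw
  set Φ' : D → D := fun x => ⟨Φ x, hΦmem x x.2⟩ with hΦ'
  have hlip : LipschitzWith q Φ' := by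
    refine LipschitzWith.of_dist_le_mul (fun x y => ?_)
    rw [Subtype.dist_eq, Subtype.dist_eq, dist_eq_norm, dist_eq_norm]
    exact hcontr x x.2 y y.2
  have hcw : ContractingWith q Φ' := ⟨hq1, hlip⟩
  set z : K := ((ContractingWith.fixedPoint Φ' hcw : D) : K) with hzdef
  have hzD : z ∈ D := (ContractingWith.fixedPoint Φ' hcw).2
  have hzfix : Φ z = z := congrArg Subtype.val hcw.fixedPoint_isFixedPt
  have hgz := hgne z hzD
  refine ⟨z, hDsub z hzD, ?_⟩
  have h1 : c j * w / gg p c j z = c j - z := by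
    rw [show c j - z = -(Φ z - c j) by rw [hzfix]; ring, hΦ]
    ring
  have h3 : c j * w = (c j - z) * gg p c j z := (div_eq_iff hgz).mp h1
  rw [fc_factor hR hc hj, vv_jsub hj,
    show (1 : K) - z / c j = (c j - z) / c j by rw [sub_div, div_self hcj0],
    div_mul_eq_mul_div, ← h3, mul_comm (c j) w, mul_div_assoc, div_self hcj0, mul_one]

end Part2

end AbsFc

/-- **Lemma 3.3.** On `A ∪ B_0` (away from `0`) one has `|f_c(z)| = φ(|z|)`; and for each
`j ≥ 1`, `f_c` maps `B_j` bijectively onto `{|w| < φ(R_j)}`, scaling all distances by the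
factor `φ(R_j)/R_j`. -/
theorem abs_fc
    (p : ℕ) [Fact p.Prime] (K : Type*) [NontriviallyNormedField K] [Algebra ℚ_[p] K]
    (hK : IsCp p K) (R : ℕ → ℝ) (hR : IsGenericRadii p R)
    (c : ℕ → K) (hc : InC p R c) :
    (∀ z : K, z ≠ 0 → z ∈ Aset R c ∪ Bset R c 0 → ‖fc p c z‖ = phi p R ‖z‖) ∧
    (∀ j, 1 ≤ j →
      Set.BijOn (fc p c) (Bset R c j) {w : K | ‖w‖ < phi p R (R j)} ∧
      ∀ z w : K, z ∈ Bset R c j → w ∈ Bset R c j →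
        ‖fc p c z - fc p c w‖ = (phi p R (R j) / R j) * ‖z - w‖) := by
  haveI : CompleteSpace K := hK.complete
  haveI : IsUltrametricDist K :=
    IsUltrametricDist.isUltrametricDist_of_forall_norm_add_le_max_norm hK.isNonarch
  have hnp : ‖(p : K)‖ = (p : ℝ)⁻¹ := by
    have h := hK.norm_extends (p : ℚ_[p])
    rwa [map_natCast, Padic.norm_p] at h
  obtain ⟨hR', -⟩ := hR
  constructor
  · intro z hz hmem
    exact AbsFc.norm_fc_eq hR' hc hnp hz hmem
  · intro j hj
    have hphipos := AbsFc.phiRj_pos hR' hj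
    have hRj := AbsFc.R_pos hR' hj
    refine ⟨⟨?_, ?_, ?_⟩, ?_⟩
    · intro z hz
      have h1 := AbsFc.norm_fc_Bj hR' hc hnp hj hz
      have h2 := (AbsFc.mem_Bj hR' hc hj hz).1
      simp only [Set.mem_setOf_eq]
      rw [h1]
      calc phi p R (R j) / R j * ‖z - c j‖ < phi p R (R j) / R j * R j :=
            mul_lt_mul_of_pos_left h2 (by positivity)
      _ = phi p R (R j) := div_mul_cancel₀ _ (ne_of_gt hRj)
    · intro z hz w hw hfzw
      have h := AbsFc.fc_scaling hR' hc hnp hj hz hw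
      rw [hfzw, sub_self, norm_zero] at h
      have hnz : ‖z - w‖ = 0 := by
        by_contra hne
        have h0 : 0 < ‖z - w‖ := lt_of_le_of_ne (norm_nonneg _) (Ne.symm hne)
        nlinarith [div_pos hphipos hRj]
      rwa [norm_eq_zero, sub_eq_zero] at hnz
    · intro w hw
      simp only [Set.mem_setOf_eq] at hw
      obtain ⟨z, hzB, hfz⟩ := AbsFc.fc_surj hR' hc hnp hj hw
      exact ⟨z, hzB, hfz⟩
    · intro z w hz hw
      exact AbsFc.fc_scaling hR' hc hnp hj hz hw
end
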